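/- Assume L ⊆ Σ^ω is recognized by some deterministic co-Büchi automaton. Then the canonical automaton A_{≡_L} is semantically-deterministic, unsafe-saturated, normalized, and history-deterministic. -/

import Mathlib

open Classical

/-- Rank of a transition in a co-Büchi automaton: `one` or `two`. -/
inductive Rk | one | two
deriving DecidableEq

/-- A co-Büchi automaton over alphabet `A` with state type `Q`:
initial states and a transition relation where each transition carries a rank. -/
structure CoBuchi (A : Type) (Q : Type) where
  init : Set Q
  delta : Set (Q × A × Rk × Q)

namespace CoBuchi

variable {A Q : Type}

/-- Every state has an outgoing transition on every letter. -/
def Total (M : CoBuchi A Q) : Prop :=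
  ∀ q a, ∃ r q', (q, a, r, q') ∈ M.delta

/-- The prefix `α[0..n-1]` of an infinite word. -/
def prefW (α : ℕ → A) (n : ℕ) : List A := (List.range n).map α

/-- The infinite word `a·w`. -/
def consW (a : A) (w : ℕ → A) : ℕ → A := fun n => match n with
  | 0 => a
  | Nat.succ k => w k

/-- `L(M,q)`: infinite words having a run from `q` with only finitely many rank-1
transitions. -/
def LangFrom (M : CoBuchi A Q) (q : Q) : Set (ℕ → A) :=
  { w | ∃ (ρ : ℕ → Q) (r : ℕ → Rk), ρ 0 = q ∧
        (∀ n, (ρ n, w n, r n, ρ (n + 1)) ∈ M.delta) ∧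
        ∃ N, ∀ n, N ≤ n → r n = Rk.two }

/-- `L(M)`: the language of the automaton. -/
def Lang (M : CoBuchi A Q) : Set (ℕ → A) :=
  { w | ∃ q ∈ M.init, w ∈ M.LangFrom q }

/-- `q →₂^w q'`: a finite run from `q` to `q'` on `w` using only rank-2 transitions. -/
def SafeReach (M : CoBuchi A Q) : Q → List A → Q → Prop
  | q, [], q' => q = q'
  | q, a :: w, q' => ∃ p, (q, a, Rk.two, p) ∈ M.delta ∧ SafeReach M p w q'

/-- A finite run from `q` to `q'` on `w` using transitions of any rank. -/
def Reach (M : CoBuchi A Q) : Q → List A → Q → Prop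
  | q, [], q' => q = q'
  | q, a :: w, q' => ∃ r p, (q, a, r, p) ∈ M.delta ∧ Reach M p w q'

/-- Safe language of a state. -/
def Lsf (M : CoBuchi A Q) (q : Q) : Set (List A) := { w | ∃ q', M.SafeReach q w q' }

/-- Semantically-deterministic: every transition respects residuals. -/
def SemDet (M : CoBuchi A Q) : Prop :=
  ∀ p a rk q, (p, a, rk, q) ∈ M.delta →
    M.LangFrom q = { w | consW a w ∈ M.LangFrom p }

/-- Unsafe-saturated: all residual-respecting rank-1 transitions are present. -/
def UnsafeSat (M : CoBuchi A Q) : Prop :=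
  ∀ p a q, M.LangFrom q = { w | consW a w ∈ M.LangFrom p } →
    (p, a, Rk.one, q) ∈ M.delta

/-- Safe-deterministic: at most one rank-2 transition per state and letter. -/
def SafeDet (M : CoBuchi A Q) : Prop :=
  ∀ p a q q', (p, a, Rk.two, q) ∈ M.delta → (p, a, Rk.two, q') ∈ M.delta → q = q'

/-- Normalized: every rank-2 transition can be completed to a rank-2 loop. -/
def Normalized (M : CoBuchi A Q) : Prop :=
  ∀ q a q', (q, a, Rk.two, q') ∈ M.delta → ∃ x, M.SafeReach q' x q

/-- Deterministic: one initial state, exactly one transition per state and letter. -/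
def Deterministic (M : CoBuchi A Q) : Prop :=
  (∃! q, q ∈ M.init) ∧ ∀ p a, ∃! t : Rk × Q, (p, a, t.1, t.2) ∈ M.delta

/-- History-deterministic: a strategy `σ : Σ* → Q` resolving the nondeterminism,
whose run on every `α ∈ L(M)` can be ranked with finitely many rank-1 transitions. -/
def HistoryDet (M : CoBuchi A Q) : Prop :=
  ∃ σ : List A → Q, σ [] ∈ M.init ∧
    (∀ w a, ∃ rk, (σ w, a, rk, σ (w ++ [a])) ∈ M.delta) ∧
    ∀ α ∈ M.Lang, ∃ r : ℕ → Rk,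
      (∀ n, (σ (prefW α n), α n, r n, σ (prefW α (n + 1))) ∈ M.delta) ∧
      ∃ N, ∀ n, N ≤ n → r n = Rk.two

/-- `q` and `q'` are in the same safe SCC (mutually reachable via rank-2 runs). -/
def SameSafeSCC (M : CoBuchi A Q) (q q' : Q) : Prop :=
  (∃ x, M.SafeReach q x q') ∧ (∃ y, M.SafeReach q' y q)

end CoBuchi

section LangDefs

variable {A : Type} [Nonempty A]

/-- The infinite word `u·w`. -/
def appW (u : List A) (w : ℕ → A) : ℕ → A :=
  fun n => if h : n < u.length then u.get ⟨n, h⟩ else w (n - u.length)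

/-- The infinite word `v^ω` (arbitrary if `v = ε`). -/
noncomputable def iterW (v : List A) : ℕ → A :=
  fun n =>
    if h : v = [] then Classical.arbitrary A
    else v.get ⟨n % v.length, Nat.mod_lt _ (List.length_pos_iff.mpr h)⟩

/-- The ultimately periodic word `u v^ω`. -/
noncomputable def upW (u v : List A) : ℕ → A := appW u (iterW v)

/-- The right congruence `u ∼_L v`. -/
def SimL (L : Set (ℕ → A)) (u v : List A) : Prop :=
  ∀ w : ℕ → A, appW u w ∈ L ↔ appW v w ∈ L

/-- `(u,v) ≈_L ⊥`: `v ≠ ε` and `u(vx)^ω ∉ L` for all `x` with `uvx ∼_L u`. -/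
def ApproxBot (L : Set (ℕ → A)) (u v : List A) : Prop :=
  v ≠ [] ∧ ∀ x : List A, SimL L (u ++ v ++ x) u → upW u (v ++ x) ∉ L

/-- The safe language of a pair: `sfl(u,v) = {x | (u,vx) not ≈_L ⊥}`. -/
def Sfl (L : Set (ℕ → A)) (u v : List A) : Set (List A) :=
  { x | ¬ ApproxBot L u (v ++ x) }

/-- `(u,v) ≡_L (u',v')`. -/
def EquivL (L : Set (ℕ → A)) (u v u' v' : List A) : Prop :=
  SimL L (u ++ v) (u' ++ v') ∧ Sfl L u v = Sfl L u' v'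

/-- `(u,v)` is pointed. -/
def IsPointed (L : Set (ℕ → A)) (u v : List A) : Prop :=
  ¬ ApproxBot L u v ∧
    ∀ u₁ u₂ : List A, SimL L (u₁ ++ u₂) u → ¬ ApproxBot L u₁ (u₂ ++ v) →
      Sfl L u v = Sfl L u₁ (u₂ ++ v)

/-- `(u,v) ≈_L (u',v')` (for pairs with nonempty second components). -/
def ApproxL (L : Set (ℕ → A)) (u v u' v' : List A) : Prop :=
  SimL L u u' ∧ SimL L (u ++ v) (u' ++ v') ∧
    ∀ x : List A, SimL L (u ++ v ++ x) u →
      (upW u (v ++ x) ∈ L ↔ upW u' (v' ++ x) ∈ L)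

/-- `L` is recognized by some (total) deterministic co-Büchi automaton. -/
def DCWRecognizable (L : Set (ℕ → A)) : Prop :=
  ∃ (Q : Type) (_ : Fintype Q) (M : CoBuchi A Q), M.Deterministic ∧ M.Lang = L

/-- IsPointed pairs. -/
def PointedPair (L : Set (ℕ → A)) : Type :=
  { p : List A × List A // IsPointed L p.1 p.2 }

/-- `≡_L` as a setoid on all pairs. -/
def equivLSetoid (L : Set (ℕ → A)) : Setoid (List A × List A) where
  r p q := EquivL L p.1 p.2 q.1 q.2
  iseqv := {
    refl := fun p => ⟨fun w => Iff.rfl, rfl⟩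
    symm := fun h => ⟨fun w => (h.1 w).symm, h.2.symm⟩
    trans := fun h g => ⟨fun w => (h.1 w).trans (g.1 w), h.2.trans g.2⟩ }

/-- `≡_L` as a setoid on pointed pairs. -/
def canonSetoid (L : Set (ℕ → A)) : Setoid (PointedPair L) where
  r p q := EquivL L p.1.1 p.1.2 q.1.1 q.1.2
  iseqv := {
    refl := fun p => ⟨fun w => Iff.rfl, rfl⟩
    symm := fun h => ⟨fun w => (h.1 w).symm, h.2.symm⟩
    trans := fun h g => ⟨fun w => (h.1 w).trans (g.1 w), h.2.trans g.2⟩ }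

/-- States of the canonical automaton: `≡_L`-classes of pointed pairs. -/
def CanonState (L : Set (ℕ → A)) : Type := Quotient (canonSetoid L)

/-- The class `⟦u,v⟧` of a pointed pair. -/
def cls (L : Set (ℕ → A)) (u v : List A) (h : IsPointed L u v) : CanonState L :=
  Quotient.mk (canonSetoid L) ⟨(u, v), h⟩

/-- The canonical automaton `A_{≡_L}`. -/
def canonAut (L : Set (ℕ → A)) : CoBuchi A (CanonState L) where
  init := { s | ∃ (u v : List A) (h : IsPointed L u v),
              s = cls L u v h ∧ SimL L (u ++ v) [] }
  delta := { t |
    (∃ (u v : List A) (h : IsPointed L u v) (h' : IsPointed L u (v ++ [t.2.1])),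
        ¬ ApproxBot L u (v ++ [t.2.1]) ∧
        t.1 = cls L u v h ∧ t.2.2.1 = Rk.two ∧
        t.2.2.2 = cls L u (v ++ [t.2.1]) h') ∨
    (∃ (u v u' v' : List A) (h : IsPointed L u v) (h' : IsPointed L u' v'),
        SimL L (u ++ v ++ [t.2.1]) (u' ++ v') ∧
        t.1 = cls L u v h ∧ t.2.2.1 = Rk.one ∧ t.2.2.2 = cls L u' v' h') }

/-- `θ(u,v)`: states of `A_{≡_L}` reachable by reading `u` from an initial state
(any ranks) and then `v` via rank-2 transitions only. -/
def theta (L : Set (ℕ → A)) (u v : List A) : Set (CanonState L) :=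
  { q | ∃ p₀ ∈ (canonAut L).init, ∃ p,
          (canonAut L).Reach p₀ u p ∧ (canonAut L).SafeReach p v q }

/-- `(u,v)` is supported: `θ(u,v) ≠ ∅`. -/
def Supported (L : Set (ℕ → A)) (u v : List A) : Prop := (theta L u v).Nonempty

/-- `(u,v)` is double-supported: two distinct states of `θ(u,v)` in the same safe SCC. -/
def DoubleSupported (L : Set (ℕ → A)) (u v : List A) : Prop :=
  ∃ q ∈ theta L u v, ∃ q' ∈ theta L u v, q ≠ q' ∧ (canonAut L).SameSafeSCC q q'

/-- `(u,v)` is single-supported. -/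
def SingleSupported (L : Set (ℕ → A)) (u v : List A) : Prop :=
  Supported L u v ∧ ¬ DoubleSupported L u v

/-- `w` concatenated with itself `m` times. -/
def repCat (w : List A) : ℕ → List A
  | 0 => []
  | Nat.succ m => w ++ repCat w m

end LangDefs
section Stmt9Aux
set_option linter.unusedVariables false
set_option linter.unusedSectionVars false
set_option maxHeartbeats 1000000

open CoBuchi

variable {A : Type} [Nonempty A]

/-! ### Word lemmas -/

/-- the suffix of an infinite word -/
def sfW (α : ℕ → A) (n : ℕ) : ℕ → A := fun k => α (n + k)

/-- finite segment of an infinite word -/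
def segW (α : ℕ → A) (m l : ℕ) : List A := (List.range l).map (fun i => α (m + i))

lemma appW_nil (w : ℕ → A) : appW ([] : List A) w = w := by
  funext n; simp [appW]

lemma appW_lt (u : List A) (w : ℕ → A) {n : ℕ} (h : n < u.length) :
    appW u w n = u.get ⟨n, h⟩ := by simp [appW, h]

lemma appW_ge (u : List A) (w : ℕ → A) {n : ℕ} (h : u.length ≤ n) :
    appW u w n = w (n - u.length) := by
  have : ¬ n < u.length := by omega
  simp [appW, this]

lemma appW_add (u : List A) (w : ℕ → A) (n : ℕ) :
    appW u w (u.length + n) = w n := by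
  rw [appW_ge u w (by omega)]; congr 1; omega

lemma appW_append (u v : List A) (w : ℕ → A) :
    appW (u ++ v) w = appW u (appW v w) := by
  funext n
  rcases lt_or_ge n u.length with h | h
  · rw [appW_lt _ _ (by simp; omega), appW_lt _ _ h]
    simp only [List.get_eq_getElem]
    exact (List.getElem_append_left h).symm ▸ rfl
  · rcases lt_or_ge n (u.length + v.length) with h2 | h2
    · rw [appW_lt _ _ (by simp; omega), appW_ge _ _ h, appW_lt _ _ (by omega)]
      simp only [List.get_eq_getElem]
      exact List.getElem_append_right h
    · rw [appW_ge _ _ (by simp; omega), appW_ge _ _ h, appW_ge _ _ (by omega)]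
      congr 1; simp; omega

lemma appW_singleton (a : A) (w : ℕ → A) : appW [a] w = consW a w := by
  funext n
  match n with
  | 0 => rw [appW_lt _ _ (by simp)]; rfl
  | Nat.succ k => rw [appW_ge _ _ (by simp)]; rfl

lemma appW_snoc (u : List A) (a : A) (w : ℕ → A) :
    appW (u ++ [a]) w = appW u (consW a w) := by
  rw [appW_append, appW_singleton]

lemma prefW_zero (α : ℕ → A) : prefW α 0 = [] := rfl

lemma prefW_succ (α : ℕ → A) (n : ℕ) :
    prefW α (n + 1) = prefW α n ++ [α n] := by
  simp [prefW, List.range_succ]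

lemma prefW_length (α : ℕ → A) (n : ℕ) : (prefW α n).length = n := by
  simp [prefW]

lemma segW_zero (α : ℕ → A) (m : ℕ) : segW α m 0 = [] := rfl

lemma segW_succ_left (α : ℕ → A) (m l : ℕ) :
    segW α m (l + 1) = α m :: segW α (m + 1) l := by
  simp only [segW]
  rw [List.range_succ_eq_map]
  simp only [List.map_cons, List.map_map, Function.comp]
  congr 1
  apply List.map_congr_left; intro i _; simp; congr 1; omega

lemma prefW_add (α : ℕ → A) (m l : ℕ) :
    prefW α (m + l) = prefW α m ++ segW α m l := by
  induction l with
  | zero => simp [segW_zero]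
  | succ l ih =>
    rw [show m + (l+1) = (m+l) + 1 by omega, prefW_succ, ih]
    simp only [segW, List.range_succ, List.map_append, List.map_cons, List.map_nil,
      List.append_assoc]

lemma segW_eq_prefW_sfW (α : ℕ → A) (m l : ℕ) :
    segW α m l = prefW (sfW α m) l := by
  simp [segW, prefW, sfW]

lemma appW_prefW_sfW (α : ℕ → A) (n : ℕ) :
    appW (prefW α n) (sfW α n) = α := by
  funext k
  rcases lt_or_ge k n with h | h
  · rw [appW_lt _ _ (by rw [prefW_length]; exact h)]
    simp [prefW]
  · rw [appW_ge _ _ (by rw [prefW_length]; exact h)]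
    simp [sfW, prefW_length]; congr 1; omega

lemma sfW_appW (u : List A) (w : ℕ → A) : sfW (appW u w) u.length = w := by
  funext k; simp [sfW, appW_add]

/-! ### SimL and residuals -/

/-- The residual language of `L` by a finite word. -/
def ResL (L : Set (ℕ → A)) (u : List A) : Set (ℕ → A) := {w | appW u w ∈ L}

lemma simL_iff_resL {L : Set (ℕ → A)} {u v : List A} :
    SimL L u v ↔ ResL L u = ResL L v := by
  constructor
  · intro h; ext w; exact h w
  · intro h w; constructor
    · intro hw; exact (Set.ext_iff.mp h w).mp hw
    · intro hw; exact (Set.ext_iff.mp h w).mpr hw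

lemma simL_refl (L : Set (ℕ → A)) (u : List A) : SimL L u u := fun _ => Iff.rfl

lemma simL_symm {L : Set (ℕ → A)} {u v : List A} (h : SimL L u v) : SimL L v u :=
  fun w => (h w).symm

lemma simL_trans {L : Set (ℕ → A)} {u v x : List A} (h : SimL L u v) (h' : SimL L v x) :
    SimL L u x := fun w => (h w).trans (h' w)

lemma resL_append (L : Set (ℕ → A)) (u v : List A) :
    ResL L (u ++ v) = {w | appW v w ∈ ResL L u} := by
  ext w; simp [ResL, appW_append]

lemma simL_append_right {L : Set (ℕ → A)} {u v : List A} (h : SimL L u v) (x : List A) :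
    SimL L (u ++ x) (v ++ x) := by
  rw [simL_iff_resL] at h ⊢
  rw [resL_append, resL_append, h]

/-! ### repCat and iterW -/

lemma repCat_succ (w : List A) (k : ℕ) : repCat w (k+1) = w ++ repCat w k := rfl

lemma repCat_length (w : List A) (k : ℕ) : (repCat w k).length = k * w.length := by
  induction k with
  | zero => simp [repCat]
  | succ k ih => simp [repCat_succ, ih]; ring

lemma repCat_add (w : List A) (m n : ℕ) :
    repCat w (m + n) = repCat w m ++ repCat w n := by
  induction m with
  | zero => simp [repCat]
  | succ m ih => rw [show m+1+n = (m+n)+1 by omega, repCat_succ, repCat_succ, ih,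
      List.append_assoc]

lemma iterW_apply {v : List A} (hv : v ≠ []) (n : ℕ) :
    iterW v n = v.get ⟨n % v.length, Nat.mod_lt _ (List.length_pos_iff.mpr hv)⟩ := by
  simp [iterW, hv]

lemma iterW_add_length {v : List A} (hv : v ≠ []) (n : ℕ) :
    iterW v (v.length + n) = iterW v n := by
  rw [iterW_apply hv, iterW_apply hv]
  congr 1
  simp [Nat.add_mod_left]

lemma iterW_eq_appW {v : List A} (hv : v ≠ []) : iterW v = appW v (iterW v) := by
  funext n
  rcases lt_or_ge n v.length with h | h
  · rw [appW_lt _ _ h, iterW_apply hv]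
    congr 1
    simp [Nat.mod_eq_of_lt h]
  · rw [appW_ge _ _ h, iterW_apply hv, iterW_apply hv]
    have : n % v.length = (n - v.length) % v.length := by
      conv_lhs => rw [show n = v.length + (n - v.length) by omega]
      rw [Nat.add_mod_left]
    simp only [this]

lemma upW_eq (u v : List A) : upW u v = appW u (iterW v) := rfl

lemma iterW_eq_appW_repCat {v : List A} (hv : v ≠ []) (k : ℕ) :
    iterW v = appW (repCat v k) (iterW v) := by
  induction k with
  | zero => simp [repCat, appW_nil]
  | succ k ih => rw [repCat_succ, appW_append, ← ih, ← iterW_eq_appW hv]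

end Stmt9Aux
section Stmt9M

open CoBuchi

set_option linter.unusedVariables false
set_option linter.unusedSectionVars false
set_option maxHeartbeats 1000000

variable {A : Type} [Nonempty A] {Q : Type}

variable (M : CoBuchi A Q)

/-- the unique transition of a deterministic automaton -/
noncomputable def nxt (hdet : M.Deterministic) (p : Q) (a : A) : Rk × Q :=
  (hdet.2 p a).exists.choose

variable {M}
variable (hdet : M.Deterministic)

lemma nxt_spec (p : Q) (a : A) :
    (p, a, (nxt M hdet p a).1, (nxt M hdet p a).2) ∈ M.delta :=
  (hdet.2 p a).exists.choose_spec

lemma nxt_unique {p : Q} {a : A} {rk : Rk} {q : Q} (h : (p, a, rk, q) ∈ M.delta) :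
    (rk, q) = nxt M hdet p a := by
  have h1 := (hdet.2 p a).unique (y₁ := (rk, q)) (y₂ := nxt M hdet p a) h (nxt_spec hdet p a)
  exact h1

/-- transition membership characterization -/
lemma mem_delta_iff {p : Q} {a : A} {rk : Rk} {q : Q} :
    (p, a, rk, q) ∈ M.delta ↔ (rk, q) = nxt M hdet p a := by
  constructor
  · exact nxt_unique hdet
  · rintro h
    have := nxt_spec hdet p a
    rw [← h] at this
    exact this

/-- rank of the unique transition -/
noncomputable def rkOf (p : Q) (a : A) : Rk := (nxt M hdet p a).1

/-- target of the unique transition -/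
noncomputable def stOf (p : Q) (a : A) : Q := (nxt M hdet p a).2

lemma mem_delta_iff' {p : Q} {a : A} {rk : Rk} {q : Q} :
    (p, a, rk, q) ∈ M.delta ↔ rk = rkOf hdet p a ∧ q = stOf hdet p a := by
  rw [mem_delta_iff hdet, rkOf, stOf, Prod.ext_iff]

/-- iterated transition function -/
noncomputable def dstar (p : Q) (w : List A) : Q := w.foldl (stOf hdet) p

@[simp] lemma dstar_nil (p : Q) : dstar hdet p [] = p := rfl

lemma dstar_cons (p : Q) (a : A) (w : List A) :
    dstar hdet p (a :: w) = dstar hdet (stOf hdet p a) w := rfl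

lemma dstar_append (p : Q) (u v : List A) :
    dstar hdet p (u ++ v) = dstar hdet (dstar hdet p u) v := by
  simp [dstar, List.foldl_append]

lemma dstar_snoc (p : Q) (u : List A) (a : A) :
    dstar hdet p (u ++ [a]) = stOf hdet (dstar hdet p u) a := by
  rw [dstar_append]; rfl

/-- the canonical run -/
noncomputable def natRun (p : Q) (w : ℕ → A) (n : ℕ) : Q := dstar hdet p (prefW w n)

lemma natRun_zero (p : Q) (w : ℕ → A) : natRun hdet p w 0 = p := rfl

lemma natRun_succ (p : Q) (w : ℕ → A) (n : ℕ) :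
    natRun hdet p w (n + 1) = stOf hdet (natRun hdet p w n) (w n) := by
  simp [natRun, prefW_succ, dstar_snoc]

/-- uniqueness of runs in a deterministic automaton -/
lemma run_unique {p : Q} {w : ℕ → A} {ρ : ℕ → Q} {r : ℕ → Rk}
    (h0 : ρ 0 = p) (hstep : ∀ n, (ρ n, w n, r n, ρ (n + 1)) ∈ M.delta) :
    ∀ n, ρ n = natRun hdet p w n ∧ r n = rkOf hdet (natRun hdet p w n) (w n) := by
  have key : ∀ n, ρ n = natRun hdet p w n := by
    intro n
    induction n with
    | zero => exact h0
    | succ n ih =>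
      have := (mem_delta_iff' hdet).mp (hstep n)
      rw [natRun_succ, ← ih]
      exact this.2
  intro n
  refine ⟨key n, ?_⟩
  have := (mem_delta_iff' hdet).mp (hstep n)
  rw [← key n]
  exact this.1

lemma rk_eq_two_of_ne_one {r : Rk} (h : r ≠ Rk.one) : r = Rk.two := by
  cases r
  · exact absurd rfl h
  · rfl

/-- membership in `LangFrom` for deterministic automata -/
lemma langFrom_iff (p : Q) (w : ℕ → A) :
    w ∈ M.LangFrom p ↔ ∃ N, ∀ n, N ≤ n → rkOf hdet (natRun hdet p w n) (w n) = Rk.two := by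
  constructor
  · rintro ⟨ρ, r, h0, hstep, N, hN⟩
    refine ⟨N, fun n hn => ?_⟩
    rw [← (run_unique hdet h0 hstep n).2]
    exact hN n hn
  · rintro ⟨N, hN⟩
    refine ⟨natRun hdet p w, fun n => rkOf hdet (natRun hdet p w n) (w n), rfl, ?_, N, hN⟩
    intro n
    rw [natRun_succ]
    exact (mem_delta_iff' hdet).mpr ⟨rfl, rfl⟩

lemma prefW_getElem (α : ℕ → A) (n i : ℕ) (h : i < (prefW α n).length) :
    (prefW α n)[i] = α i := by
  simp [prefW]

lemma prefW_appW_length (x : List A) (w : ℕ → A) :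
    prefW (appW x w) x.length = x := by
  apply List.ext_getElem (by simp [prefW_length])
  intro i h1 h2
  rw [prefW_getElem, appW_lt _ _ h2]
  rfl

lemma prefW_appW (x : List A) (w : ℕ → A) (n : ℕ) :
    prefW (appW x w) (x.length + n) = x ++ prefW w n := by
  induction n with
  | zero => simpa [prefW_zero] using prefW_appW_length x w
  | succ n ih =>
    rw [show x.length + (n+1) = (x.length + n) + 1 by omega, prefW_succ, ih, appW_add,
      prefW_succ, List.append_assoc]

lemma natRun_appW (p : Q) (x : List A) (w : ℕ → A) (n : ℕ) :
    natRun hdet p (appW x w) (x.length + n) = natRun hdet (dstar hdet p x) w n := by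
  simp [natRun, prefW_appW, dstar_append]

/-- residual of `LangFrom` -/
lemma langFrom_dstar (p : Q) (x : List A) :
    M.LangFrom (dstar hdet p x) = {w | appW x w ∈ M.LangFrom p} := by
  ext w
  rw [Set.mem_setOf_eq, langFrom_iff hdet, langFrom_iff hdet]
  constructor
  · rintro ⟨N, hN⟩
    refine ⟨x.length + N, fun n hn => ?_⟩
    obtain ⟨m, rfl⟩ : ∃ m, n = x.length + m := ⟨n - x.length, by omega⟩
    rw [natRun_appW, appW_add]
    exact hN m (by omega)
  · rintro ⟨N, hN⟩
    refine ⟨N, fun m hm => ?_⟩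
    have := hN (x.length + m) (by omega)
    rwa [natRun_appW, appW_add] at this

end Stmt9M
section Stmt9Safe

open CoBuchi

set_option linter.unusedVariables false
set_option linter.unusedSectionVars false
set_option maxHeartbeats 1000000

variable {A : Type} [Nonempty A] {Q : Type} {M : CoBuchi A Q} (hdet : M.Deterministic)

/-- all transitions along the canonical run on `w` from `p` have rank 2 -/
def SafeP (hdet : M.Deterministic) : Q → List A → Prop
  | _, [] => True
  | p, a :: w => rkOf hdet p a = Rk.two ∧ SafeP hdet (stOf hdet p a) w

@[simp] lemma safeP_nil (p : Q) : SafeP hdet p [] := trivial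

lemma safeP_cons {p : Q} {a : A} {w : List A} :
    SafeP hdet p (a :: w) ↔ rkOf hdet p a = Rk.two ∧ SafeP hdet (stOf hdet p a) w :=
  Iff.rfl

lemma safeReach_iff (p : Q) (w : List A) (q : Q) :
    M.SafeReach p w q ↔ SafeP hdet p w ∧ dstar hdet p w = q := by
  induction w generalizing p with
  | nil =>
    simp only [SafeReach, safeP_nil, dstar_nil, true_and]
  | cons a w ih =>
    simp only [SafeReach, safeP_cons, dstar_cons]
    constructor
    · rintro ⟨p', hmem, hsr⟩
      obtain ⟨h2a, h2b⟩ := (mem_delta_iff' hdet).mp hmem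
      obtain ⟨h3, h4⟩ := (ih p').mp hsr
      subst h2b
      exact ⟨⟨h2a.symm, h3⟩, h4⟩
    · rintro ⟨⟨hrk, hsp⟩, hds⟩
      exact ⟨stOf hdet p a, (mem_delta_iff' hdet).mpr ⟨hrk.symm, rfl⟩, (ih _).mpr ⟨hsp, hds⟩⟩

lemma safeP_append {p : Q} {u v : List A} :
    SafeP hdet p (u ++ v) ↔ SafeP hdet p u ∧ SafeP hdet (dstar hdet p u) v := by
  induction u generalizing p with
  | nil => simp
  | cons a u ih =>
    simp only [List.cons_append, safeP_cons, dstar_cons, ih, and_assoc]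

lemma safeP_prefix {p : Q} {u v : List A} (h : SafeP hdet p (u ++ v)) : SafeP hdet p u :=
  ((safeP_append hdet).mp h).1

/-- safe words from `p` that can be completed to a safe loop at `p` -/
def SfLoop (hdet : M.Deterministic) (p : Q) : Set (List A) :=
  {w | ∃ z, M.SafeReach p (w ++ z) p}

lemma sfLoop_nil (p : Q) : [] ∈ SfLoop hdet p := ⟨[], by simp [SafeReach]⟩

lemma sfLoop_iff {p : Q} {w : List A} :
    w ∈ SfLoop hdet p ↔ SafeP hdet p w ∧
      ∃ z, SafeP hdet (dstar hdet p w) z ∧ dstar hdet (dstar hdet p w) z = p := by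
  constructor
  · rintro ⟨z, hz⟩
    rw [safeReach_iff hdet] at hz
    obtain ⟨h1, h2⟩ := hz
    rw [safeP_append hdet] at h1
    refine ⟨h1.1, z, h1.2, ?_⟩
    rw [← dstar_append]; exact h2
  · rintro ⟨h1, z, h2, h3⟩
    refine ⟨z, (safeReach_iff hdet _ _ _).mpr ⟨?_, ?_⟩⟩
    · rw [safeP_append hdet]; exact ⟨h1, h2⟩
    · rw [dstar_append]; exact h3

lemma sfLoop_prefix {p : Q} {u v : List A} (h : u ++ v ∈ SfLoop hdet p) :
    u ∈ SfLoop hdet p := by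
  obtain ⟨z, hz⟩ := h
  exact ⟨v ++ z, by rwa [List.append_assoc] at hz⟩

/-- survival: extending a safe-loop word -/
lemma sfLoop_append_iff {p : Q} {v : List A} (hv : v ∈ SfLoop hdet p) (x : List A) :
    v ++ x ∈ SfLoop hdet p ↔ x ∈ SfLoop hdet (dstar hdet p v) := by
  obtain ⟨hsp, z, hz1, hz2⟩ := (sfLoop_iff hdet).mp hv
  constructor
  · rintro hvx
    obtain ⟨hsp2, z2, hz3, hz4⟩ := (sfLoop_iff hdet).mp hvx
    rw [safeP_append hdet] at hsp2
    rw [dstar_append] at hz3 hz4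
    -- loop for x at dstar p v : x ++ (z2 ++ v)
    refine (sfLoop_iff hdet).mpr ⟨hsp2.2, z2 ++ v, ?_, ?_⟩
    · rw [safeP_append hdet]
      refine ⟨hz3, ?_⟩
      rw [hz4]
      exact hsp
    · rw [dstar_append, hz4]
  · rintro hx
    obtain ⟨hsp2, z2, hz3, hz4⟩ := (sfLoop_iff hdet).mp hx
    -- loop for v ++ x at p : (v ++ x) ++ (z2 ++ z)  where z loops  dstar p v  back to p?
    -- better: x loops at dstar p v via z2 back to dstar p v; then append z to return to p
    refine (sfLoop_iff hdet).mpr ⟨?_, z2 ++ z, ?_, ?_⟩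
    · rw [safeP_append hdet]; exact ⟨hsp, hsp2⟩
    · rw [dstar_append, safeP_append hdet, hz4]
      exact ⟨hz3, hz1⟩
    · simp only [dstar_append]
      rw [hz4, hz2]

/-- a full loop stays in the loop set -/
lemma sfLoop_loop_append {p : Q} {m : List A} (hm : m ∈ SfLoop hdet p)
    (hmp : dstar hdet p m = p) {x : List A} (hx : x ∈ SfLoop hdet p) :
    m ++ x ∈ SfLoop hdet p := by
  rw [sfLoop_append_iff hdet hm, hmp]
  exact hx

/-- stepwise ranks of a safe word -/
lemma safeP_rank {p : Q} {c : List A} (h : SafeP hdet p c) :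
    ∀ k (hk : k < c.length), rkOf hdet (dstar hdet p (c.take k)) (c.get ⟨k, hk⟩) = Rk.two := by
  induction c generalizing p with
  | nil => intro k hk; simp at hk
  | cons a c ih =>
    intro k hk
    match k with
    | 0 => exact h.1
    | Nat.succ j =>
      simp only [List.take_succ_cons, List.get_cons_succ, dstar_cons]
      exact ih h.2 j (by simpa using hk)

end Stmt9Safe
section Stmt9Char

open CoBuchi

set_option linter.unusedVariables false
set_option linter.unusedSectionVars false
set_option maxHeartbeats 1000000

variable {A : Type} [Nonempty A] {Q : Type} {M : CoBuchi A Q} (hdet : M.Deterministic)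

/-- the unique initial state -/
noncomputable def q0 (hdet : M.Deterministic) : Q := hdet.1.exists.choose

lemma q0_mem : q0 hdet ∈ M.init := hdet.1.exists.choose_spec

lemma lang_eq_langFrom : M.Lang = M.LangFrom (q0 hdet) := by
  ext w
  constructor
  · rintro ⟨q, hq, hw⟩
    obtain ⟨q', hq', huniq⟩ := hdet.1
    rw [huniq q hq, ← huniq (q0 hdet) (q0_mem hdet)] at hw
    exact hw
  · intro hw
    exact ⟨q0 hdet, q0_mem hdet, hw⟩

/-- a safe loop generates an accepted periodic word -/
lemma iterW_mem_langFrom {p : Q} {c : List A} (hc : c ≠ [])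
    (hsafe : SafeP hdet p c) (hloop : dstar hdet p c = p) :
    iterW c ∈ M.LangFrom p := by
  have hlen : 0 < c.length := List.length_pos_iff.mpr hc
  refine ⟨fun n => dstar hdet p (c.take (n % c.length)), fun _ => Rk.two, by simp, ?_, 0,
    fun _ _ => rfl⟩
  intro n
  set k := n % c.length with hk
  have hklt : k < c.length := Nat.mod_lt _ hlen
  have hmod : (n + 1) % c.length = (k + 1) % c.length := by
    have hn := Nat.mod_add_div n c.length
    rw [show n + 1 = k + 1 + c.length * (n / c.length) by omega]
    rw [Nat.add_mul_mod_self_left]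
  have hstep : dstar hdet p (c.take (k+1)) = stOf hdet (dstar hdet p (c.take k)) (c.get ⟨k, hklt⟩) := by
    rw [← dstar_snoc]
    congr 1
    rw [← List.concat_eq_append]
    exact (List.take_concat_get hklt).symm
  have hrank := safeP_rank hdet hsafe k hklt
  have hletter : iterW c n = c.get ⟨k, hklt⟩ := by rw [iterW_apply hc]
  rw [hletter]
  refine (mem_delta_iff' hdet).mpr ⟨hrank.symm, ?_⟩
  show dstar hdet p (c.take ((n + 1) % c.length)) = stOf hdet (dstar hdet p (c.take k)) (c.get ⟨k, hklt⟩)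
  rw [hmod]
  rcases eq_or_lt_of_le (Nat.succ_le_of_lt hklt) with heq | hlt
  · have heq2 : k + 1 = c.length := heq
    rw [heq2, Nat.mod_self, ← hstep, heq2, List.take_length, hloop]
    simp
  · rw [Nat.mod_eq_of_lt hlt, hstep]

lemma prefW_iterW {v : List A} (hv : v ≠ []) (K : ℕ) :
    prefW (iterW v) (K * v.length) = repCat v K := by
  have hlen : 0 < v.length := List.length_pos_iff.mpr hv
  induction K with
  | zero => simp [prefW_zero, repCat]
  | succ K ih =>
    have harith : (K + 1) * v.length = K * v.length + v.length := by ring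
    rw [harith, prefW_add, ih]
    have hseg : segW (iterW v) (K * v.length) v.length = v := by
      apply List.ext_getElem (by simp [segW])
      intro i h1 h2
      simp only [segW, List.getElem_map, List.getElem_range]
      rw [iterW_apply hv]
      simp only [List.get_eq_getElem]
      congr 1
      rw [Nat.mul_add_mod', Nat.mod_eq_of_lt h2]
    rw [hseg, repCat_add v K 1]
    have h1 : repCat v 1 = v := by
      show v ++ repCat v 0 = v
      simp [repCat]
    rw [h1]

lemma segW_safeP {p₀ : Q} {γ : ℕ → A} {N : ℕ}
    (hN : ∀ n, N ≤ n → rkOf hdet (natRun hdet p₀ γ n) (γ n) = Rk.two) :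
    ∀ l m, N ≤ m → SafeP hdet (natRun hdet p₀ γ m) (segW γ m l) := by
  intro l
  induction l with
  | zero => intro m hm; simp [segW_zero]
  | succ l ih =>
    intro m hm
    rw [segW_succ_left]
    refine ⟨hN m hm, ?_⟩
    rw [← natRun_succ]
    exact ih (m+1) (by omega)

lemma pigeonhole_nat {Q : Type} [Fintype Q] (f : ℕ → Q) : ∃ i j, i < j ∧ f i = f j := by
  obtain ⟨x, y, hxy, hfeq⟩ := Fintype.exists_ne_map_eq_of_card_lt
    (fun i : Fin (Fintype.card Q + 1) => f i.1) (by simp)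
  have hne : x.1 ≠ y.1 := fun h => hxy (Fin.ext h)
  rcases lt_or_gt_of_ne hne with h | h
  · exact ⟨x.1, y.1, h, hfeq⟩
  · exact ⟨y.1, x.1, h, hfeq.symm⟩

/-- from an accepted periodic word, extract a safe loop -/
lemma exists_safe_loop_state [Fintype Q] {p₀ : Q} {v : List A} (hv : v ≠ [])
    (h : iterW v ∈ M.LangFrom p₀) :
    ∃ (p : Q) (k j : ℕ), 0 < j ∧ dstar hdet p₀ (repCat v k) = p ∧
      SafeP hdet p (repCat v j) ∧ dstar hdet p (repCat v j) = p := by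
  have hlen : 0 < v.length := List.length_pos_iff.mpr hv
  obtain ⟨N, hN⟩ := (langFrom_iff hdet p₀ (iterW v)).mp h
  set γ := iterW v with hγ
  obtain ⟨i, j, hij, hfeq⟩ := pigeonhole_nat (fun k => natRun hdet p₀ γ ((N + k) * v.length))
  set p := natRun hdet p₀ γ ((N + i) * v.length) with hp
  have hkey : ∀ k, dstar hdet p₀ (repCat v k) = natRun hdet p₀ γ (k * v.length) := by
    intro k
    rw [natRun, hγ, prefW_iterW hv]
  have hNm : N ≤ (N + i) * v.length := by
    calc N = N * 1 := by ring
    _ ≤ (N + i) * v.length := Nat.mul_le_mul (by omega) hlen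
  have hsplit : (N + j) * v.length = (N + i) * v.length + (j - i) * v.length := by
    have : N + j = (N + i) + (j - i) := by omega
    rw [this, Nat.add_mul]
  have hseg : segW γ ((N + i) * v.length) ((j - i) * v.length) = repCat v (j - i) := by
    have h1 : prefW γ ((N + j) * v.length) =
        prefW γ ((N + i) * v.length) ++ segW γ ((N + i) * v.length) ((j - i) * v.length) := by
      rw [hsplit, prefW_add]
    have h2 : prefW γ ((N + j) * v.length) = prefW γ ((N + i) * v.length) ++ repCat v (j - i) := by
      rw [hγ, prefW_iterW hv, prefW_iterW hv, show N + j = (N + i) + (j - i) by omega,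
        repCat_add]
    rw [h1] at h2
    exact List.append_cancel_left h2
  refine ⟨p, N + i, j - i, by omega, hkey (N + i) ▸ rfl, ?_, ?_⟩
  · rw [← hseg, hp]
    exact segW_safeP hdet hN _ _ hNm
  · have hh : dstar hdet p₀ (repCat v (N + j)) = natRun hdet p₀ γ ((N + j) * v.length) := hkey _
    have hsplit2 : repCat v (N + j) = repCat v (N + i) ++ repCat v (j - i) := by
      rw [← repCat_add]; congr 1; omega
    rw [hsplit2, dstar_append, hkey (N + i), ← hp, ← hfeq] at hh
    exact hh

end Stmt9Char
section Stmt9Point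

open CoBuchi

set_option linter.unusedVariables false
set_option linter.unusedSectionVars false
set_option maxHeartbeats 1000000

variable {A : Type} [Nonempty A] {Q : Type} [Fintype Q] {M : CoBuchi A Q}
  (hdet : M.Deterministic) {L : Set (ℕ → A)} (hL : M.Lang = L)

lemma repCat_one' (w : List A) : repCat w 1 = w := by
  show w ++ repCat w 0 = w
  simp [repCat]

lemma simL_pump' {L : Set (ℕ → A)} {u w : List A} (h : SimL L (u ++ w) u) (k : ℕ) :
    SimL L (u ++ repCat w k) u := by
  induction k with
  | zero => simpa [repCat] using simL_refl L u
  | succ k ih =>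
    have h1 : SimL L ((u ++ w) ++ repCat w k) (u ++ repCat w k) := simL_append_right h _
    have h2 : (u ++ w) ++ repCat w k = u ++ repCat w (k + 1) := by
      rw [repCat_succ, List.append_assoc]
    rw [h2] at h1
    exact simL_trans h1 ih

include hdet hL

lemma resL_eq (u : List A) : ResL L u = M.LangFrom (dstar hdet (q0 hdet) u) := by
  rw [langFrom_dstar]
  ext w
  simp only [ResL, Set.mem_setOf_eq, ← hL, lang_eq_langFrom hdet]

/-- THE characterization of `¬ ApproxBot` via the deterministic automaton -/
theorem notBot_iff (u v : List A) :
    ¬ ApproxBot L u v ↔ ∃ p, M.LangFrom p = ResL L u ∧ v ∈ SfLoop hdet p := by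
  constructor
  · intro h
    by_cases hv : v = []
    · exact ⟨dstar hdet (q0 hdet) u, (resL_eq hdet hL u).symm, hv ▸ sfLoop_nil hdet _⟩
    · have h2 : ∃ x, SimL L (u ++ v ++ x) u ∧ upW u (v ++ x) ∈ L := by
        by_contra hc
        push_neg at hc
        exact h ⟨hv, fun x hx => (hc x) hx⟩
      obtain ⟨x, hsim, hmem⟩ := h2
      set w := v ++ x with hwdef
      have hw : w ≠ [] := by
        intro hh
        exact hv (List.append_eq_nil_iff.mp hh).1
      have hiter : iterW w ∈ M.LangFrom (dstar hdet (q0 hdet) u) := by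
        rw [← resL_eq hdet hL]
        exact hmem
      obtain ⟨p, k, j, hj, hk, hsafe, hloop⟩ := exists_safe_loop_state hdet hw hiter
      refine ⟨p, ?_, ?_⟩
      · have hpe : p = dstar hdet (q0 hdet) (u ++ repCat w k) := by
          rw [dstar_append, hk]
        rw [hpe, ← resL_eq hdet hL, ← simL_iff_resL]
        have hsim2 : SimL L (u ++ w) u := by
          rwa [hwdef, ← List.append_assoc]
        exact simL_pump' hsim2 k
      · have hmem2 : repCat w j ∈ SfLoop hdet p :=
          ⟨[], by rw [List.append_nil]; exact (safeReach_iff hdet _ _ _).mpr ⟨hsafe, hloop⟩⟩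
        have hsplit : repCat w j = v ++ (x ++ repCat w (j - 1)) := by
          conv_lhs => rw [show j = 1 + (j - 1) by omega]
          rw [repCat_add, repCat_one', hwdef, List.append_assoc]
        rw [hsplit] at hmem2
        exact sfLoop_prefix hdet hmem2
  · rintro ⟨p, hp, z, hsr⟩
    rintro ⟨hv, hall⟩
    obtain ⟨hsafe, hds⟩ := (safeReach_iff hdet _ _ _).mp hsr
    have hsim : SimL L (u ++ v ++ z) u := by
      rw [simL_iff_resL, List.append_assoc, resL_append, ← hp, ← langFrom_dstar hdet p (v ++ z),
        hds]
    have hnmem := hall z hsim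
    apply hnmem
    show appW u (iterW (v ++ z)) ∈ L
    have hne : v ++ z ≠ [] := fun hh => hv (List.append_eq_nil_iff.mp hh).1
    have hin := iterW_mem_langFrom hdet hne hsafe hds
    rw [hp] at hin
    exact hin

/-- the set of "branch endpoints" of a pair -/
def KeyS (hdet : M.Deterministic) (R : Set (ℕ → A)) (v : List A) : Set Q :=
  {e | ∃ p, M.LangFrom p = R ∧ v ∈ SfLoop hdet p ∧ dstar hdet p v = e}

theorem notBot_iff_key (u v : List A) :
    ¬ ApproxBot L u v ↔ (KeyS hdet (ResL L u) v).Nonempty := by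
  rw [notBot_iff hdet hL]
  constructor
  · rintro ⟨p, h1, h2⟩
    exact ⟨dstar hdet p v, p, h1, h2, rfl⟩
  · rintro ⟨e, p, h1, h2, _⟩
    exact ⟨p, h1, h2⟩

theorem sfl_char (u v : List A) :
    Sfl L u v = ⋃ e ∈ KeyS hdet (ResL L u) v, SfLoop hdet e := by
  ext x
  simp only [Sfl, Set.mem_setOf_eq, Set.mem_iUnion, notBot_iff hdet hL]
  constructor
  · rintro ⟨p, h1, h2⟩
    have hv : v ∈ SfLoop hdet p := sfLoop_prefix hdet h2
    exact ⟨dstar hdet p v, ⟨p, h1, hv, rfl⟩, (sfLoop_append_iff hdet hv x).mp h2⟩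
  · rintro ⟨e, ⟨p, h1, h2, h3⟩, h4⟩
    refine ⟨p, h1, ?_⟩
    rw [sfLoop_append_iff hdet h2, h3]
    exact h4

/-- refinement shrinks the branch set -/
lemma key_refine {u₁ u₂ u : List A} (hsim : SimL L (u₁ ++ u₂) u) (v : List A) :
    KeyS hdet (ResL L u₁) (u₂ ++ v) ⊆ KeyS hdet (ResL L u) v := by
  rintro e ⟨p₁, h1, h2, h3⟩
  have hu₂ : u₂ ∈ SfLoop hdet p₁ := sfLoop_prefix hdet h2
  refine ⟨dstar hdet p₁ u₂, ?_, ?_, ?_⟩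
  · rw [langFrom_dstar, ← simL_iff_resL.mp hsim, resL_append]
    ext w
    simp only [Set.mem_setOf_eq, h1]
  · rw [← sfLoop_append_iff hdet hu₂]
    exact h2
  · rw [← dstar_append]
    exact h3

lemma notBot_refine {u₁ u₂ u w : List A} (hsim : SimL L (u₁ ++ u₂) u)
    (h : ¬ ApproxBot L u₁ (u₂ ++ w)) : ¬ ApproxBot L u w := by
  rw [notBot_iff_key hdet hL] at h ⊢
  exact h.mono (key_refine hdet hL hsim w)

lemma sfl_shift (u v w : List A) : Sfl L u (v ++ w) = {y | w ++ y ∈ Sfl L u v} := by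
  ext y
  simp only [Sfl, Set.mem_setOf_eq, List.append_assoc]

lemma sfl_mono {u₁ u₂ u : List A} (hsim : SimL L (u₁ ++ u₂) u) (v : List A) :
    Sfl L u₁ (u₂ ++ v) ⊆ Sfl L u v := by
  intro x hx
  simp only [Sfl, Set.mem_setOf_eq] at hx ⊢
  rw [List.append_assoc] at hx
  exact notBot_refine hdet hL hsim hx

lemma notBot_prefix {u v w : List A} (h : ¬ ApproxBot L u (v ++ w)) : ¬ ApproxBot L u v := by
  rw [notBot_iff hdet hL] at h ⊢
  obtain ⟨p, h1, h2⟩ := h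
  exact ⟨p, h1, sfLoop_prefix hdet h2⟩

/-- pointedness propagates along valid extensions -/
lemma pointed_extend {u v : List A} (h : IsPointed L u v) {w : List A}
    (hnb : ¬ ApproxBot L u (v ++ w)) : IsPointed L u (v ++ w) := by
  refine ⟨hnb, fun u₁ u₂ hsim hnb2 => ?_⟩
  have hnb3 : ¬ ApproxBot L u₁ (u₂ ++ v) := by
    apply notBot_prefix hdet hL (w := w)
    rwa [List.append_assoc]
  have heq := h.2 u₁ u₂ hsim hnb3
  rw [sfl_shift hdet hL, show u₂ ++ (v ++ w) = (u₂ ++ v) ++ w by rw [List.append_assoc],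
    sfl_shift hdet hL, heq]

end Stmt9Point
section Stmt9Exist

open CoBuchi

set_option linter.unusedVariables false
set_option linter.unusedSectionVars false
set_option maxHeartbeats 1000000

variable {A : Type} [Nonempty A] {Q : Type} [Fintype Q] {M : CoBuchi A Q}
  (hdet : M.Deterministic) {L : Set (ℕ → A)} (hL : M.Lang = L)

/-- values of `Sfl` -/
def sflVal (hdet : M.Deterministic) : Set Q → Set (List A) :=
  fun S => ⋃ e ∈ S, SfLoop hdet e

include hdet hL

lemma sfl_mem_range (u v : List A) : Sfl L u v ∈ Set.range (sflVal hdet) :=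
  ⟨KeyS hdet (ResL L u) v, (sfl_char hdet hL u v).symm⟩

theorem exists_pointed (w : List A) : ∃ u v, IsPointed L u v ∧ SimL L (u ++ v) w := by
  classical
  set 𝒮 := {s | ∃ u v, SimL L (u ++ v) w ∧ ¬ ApproxBot L u v ∧ Sfl L u v = s} with h𝒮
  have hfin : 𝒮.Finite := by
    apply (Set.finite_range (sflVal hdet)).subset
    rintro s ⟨u, v, _, _, rfl⟩
    exact sfl_mem_range hdet hL u v
  have hne : 𝒮.Nonempty := by
    refine ⟨Sfl L w [], w, [], by simpa using simL_refl L w, ?_, rfl⟩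
    rintro ⟨hcon, _⟩
    exact hcon rfl
  obtain ⟨s, hs, hmin⟩ : ∃ s ∈ 𝒮, ∀ s' ∈ 𝒮, id s' ≤ id s → id s = id s' := by
    obtain ⟨s, hs, hm⟩ := hfin.exists_minimal hne
    exact ⟨s, hs, fun s' h1 h2 => le_antisymm (hm h1 h2) h2⟩
  obtain ⟨u, v, hsim, hnb, rfl⟩ := hs
  refine ⟨u, v, ⟨hnb, fun u₁ u₂ hsim2 hnb2 => ?_⟩, hsim⟩
  have hsub := sfl_mono hdet hL hsim2 v
  have hsimc : SimL L (u₁ ++ (u₂ ++ v)) w := by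
    have h1 : SimL L ((u₁ ++ u₂) ++ v) (u ++ v) := simL_append_right hsim2 v
    rw [List.append_assoc] at h1
    exact simL_trans h1 hsim
  have hmem : Sfl L u₁ (u₂ ++ v) ∈ 𝒮 := ⟨u₁, u₂ ++ v, hsimc, hnb2, rfl⟩
  have h9 := hmin _ hmem hsub
  simpa using h9

theorem exists_pointed_dom (w : List A) (p : Q) (hp : M.LangFrom p = ResL L w) :
    ∃ u v, IsPointed L u v ∧ SimL L (u ++ v) w ∧ SfLoop hdet p ⊆ Sfl L u v := by
  classical
  have step1 : ∃ v₀, dstar hdet p v₀ = p ∧ v₀ ∈ SfLoop hdet p ∧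
      ∀ e ∈ KeyS hdet (ResL L w) v₀, SfLoop hdet p ⊆ SfLoop hdet e := by
    set alive : List A → Set Q := fun v₀ => {p' | M.LangFrom p' = ResL L w ∧ v₀ ∈ SfLoop hdet p'}
      with halive
    have key : ∀ n (v₀ : List A), dstar hdet p v₀ = p → v₀ ∈ SfLoop hdet p →
        (alive v₀).ncard ≤ n → ∃ v₁, dstar hdet p v₁ = p ∧ v₁ ∈ SfLoop hdet p ∧
          ∀ e ∈ KeyS hdet (ResL L w) v₁, SfLoop hdet p ⊆ SfLoop hdet e := by
      intro n
      induction n with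
      | zero =>
        intro v₀ h1 h2 h3
        exfalso
        have hpmem : p ∈ alive v₀ := ⟨hp, h2⟩
        have hpos := (Set.ncard_pos (Set.toFinite _)).mpr ⟨p, hpmem⟩
        omega
      | succ n ih =>
        intro v₀ h1 h2 h3
        by_cases hdom : ∀ e ∈ KeyS hdet (ResL L w) v₀, SfLoop hdet p ⊆ SfLoop hdet e
        · exact ⟨v₀, h1, h2, hdom⟩
        · push_neg at hdom
          obtain ⟨e, ⟨p₃, he1, he2, he3⟩, hnsub⟩ := hdom
          rw [Set.not_subset] at hnsub
          obtain ⟨xh, hx1, hx2⟩ := hnsub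
          obtain ⟨ch, hch⟩ := hx1
          set v₁ := v₀ ++ (xh ++ ch) with hv₁
          have hloop : xh ++ ch ∈ SfLoop hdet p := ⟨[], by rw [List.append_nil]; exact hch⟩
          have hret : dstar hdet p (xh ++ ch) = p := ((safeReach_iff hdet _ _ _).mp hch).2
          have h1' : dstar hdet p v₁ = p := by rw [hv₁, dstar_append, h1, hret]
          have h2' : v₁ ∈ SfLoop hdet p := by
            rw [hv₁, sfLoop_append_iff hdet h2, h1]; exact hloop
          apply ih v₁ h1' h2'
          have hsub : alive v₁ ⊆ alive v₀ := by
            rintro q ⟨hq1, hq2⟩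
            exact ⟨hq1, sfLoop_prefix hdet hq2⟩
          have hp₃ : p₃ ∈ alive v₀ := ⟨he1, he2⟩
          have hp₃' : p₃ ∉ alive v₁ := by
            rintro ⟨_, hmem⟩
            rw [hv₁, sfLoop_append_iff hdet he2, he3] at hmem
            exact hx2 (sfLoop_prefix hdet hmem)
          have hlt : (alive v₁).ncard < (alive v₀).ncard :=
            Set.ncard_lt_ncard ((Set.ssubset_iff_of_subset hsub).mpr ⟨p₃, hp₃, hp₃'⟩)
              (Set.toFinite _)
          omega
    exact key (alive []).ncard [] (by simp) (sfLoop_nil hdet p) le_rfl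
  obtain ⟨v₀, hv1, hv2, hv3⟩ := step1
  set 𝒮 := {s | ∃ u v, SimL L (u ++ v) w ∧ ¬ ApproxBot L u v ∧
      (∀ e ∈ KeyS hdet (ResL L u) v, SfLoop hdet p ⊆ SfLoop hdet e) ∧ Sfl L u v = s} with h𝒮
  have hfin : 𝒮.Finite := by
    apply (Set.finite_range (sflVal hdet)).subset
    rintro s ⟨u, v, _, _, _, rfl⟩
    exact sfl_mem_range hdet hL u v
  have hne : 𝒮.Nonempty := by
    refine ⟨Sfl L w v₀, w, v₀, ?_, ?_, ?_, rfl⟩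
    · rw [simL_iff_resL, resL_append, ← hp, ← langFrom_dstar hdet p v₀, hv1, hp]
    · rw [notBot_iff hdet hL]
      exact ⟨p, hp, hv2⟩
    · intro e he
      apply hv3 e
      rwa [← hp, hp] at he
  obtain ⟨s, hs, hmin⟩ : ∃ s ∈ 𝒮, ∀ s' ∈ 𝒮, id s' ≤ id s → id s = id s' := by
    obtain ⟨s, hs, hm⟩ := hfin.exists_minimal hne
    exact ⟨s, hs, fun s' h1 h2 => le_antisymm (hm h1 h2) h2⟩
  obtain ⟨u, v, hsim, hnb, hdomi, rfl⟩ := hs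
  have hpointed : IsPointed L u v := by
    refine ⟨hnb, fun u₁ u₂ hsim2 hnb2 => ?_⟩
    have hsub := sfl_mono hdet hL hsim2 v
    have hsimc : SimL L (u₁ ++ (u₂ ++ v)) w := by
      have h1 : SimL L ((u₁ ++ u₂) ++ v) (u ++ v) := simL_append_right hsim2 v
      rw [List.append_assoc] at h1
      exact simL_trans h1 hsim
    have hmem : Sfl L u₁ (u₂ ++ v) ∈ 𝒮 := by
      refine ⟨u₁, u₂ ++ v, hsimc, hnb2, ?_, rfl⟩
      intro e he
      exact hdomi e (key_refine hdet hL hsim2 v he)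
    have h9 := hmin _ hmem hsub
    simpa using h9
  refine ⟨u, v, hpointed, hsim, ?_⟩
  obtain ⟨e, he⟩ := (notBot_iff_key hdet hL u v).mp hnb
  intro x hx
  rw [sfl_char hdet hL]
  exact Set.mem_biUnion he (hdomi e he hx)

end Stmt9Exist
section Stmt9Canon

open CoBuchi

set_option linter.unusedVariables false
set_option linter.unusedSectionVars false
set_option maxHeartbeats 1000000

variable {A : Type} [Nonempty A] {Q : Type} [Fintype Q] {M : CoBuchi A Q}
  (hdet : M.Deterministic) {L : Set (ℕ → A)} (hL : M.Lang = L)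

/-- the residual language of a canonical state -/
def Res (L : Set (ℕ → A)) [Nonempty A] : CanonState L → Set (ℕ → A) :=
  Quotient.lift (fun q : PointedPair L => ResL L (q.1.1 ++ q.1.2))
    (fun p q hpq => simL_iff_resL.mp hpq.1)

lemma res_cls {u v : List A} (h : IsPointed L u v) : Res L (cls L u v h) = ResL L (u ++ v) := rfl

lemma cls_eq_iff {u v u' v' : List A} {h : IsPointed L u v} {h' : IsPointed L u' v'} :
    cls L u v h = cls L u' v' h' ↔ EquivL L u v u' v' := by
  constructor
  · intro he
    exact Quotient.exact he
  · intro he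
    exact Quotient.sound he

lemma cls_congr {u v v' : List A} (hv : v = v') (h : IsPointed L u v) (h' : IsPointed L u v') :
    cls L u v h = cls L u v' h' := by
  subst hv
  rfl

lemma cls_congr2 {u u' v v' : List A} (hu : u = u') (hv : v = v') (h : IsPointed L u v)
    (h' : IsPointed L u' v') : cls L u v h = cls L u' v' h' := by
  subst hu; subst hv; rfl

lemma exists_rep (s : CanonState L) : ∃ (u v : List A) (h : IsPointed L u v), s = cls L u v h := by
  obtain ⟨⟨⟨u, v⟩, h⟩, hs⟩ := Quotient.exists_rep s
  exact ⟨u, v, h, hs.symm⟩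

lemma resL_snoc (L : Set (ℕ → A)) (z : List A) (a : A) :
    ResL L (z ++ [a]) = {w | consW a w ∈ ResL L z} := by
  rw [resL_append]
  ext w
  simp only [Set.mem_setOf_eq, appW_singleton]

lemma sfl_mem_iff {L : Set (ℕ → A)} {u v x : List A} :
    x ∈ Sfl L u v ↔ ¬ ApproxBot L u (v ++ x) := Iff.rfl

include hdet hL

lemma sfl_prefix_mem {u v x y : List A} (h : x ++ y ∈ Sfl L u v) : x ∈ Sfl L u v := by
  rw [sfl_mem_iff] at h ⊢
  rw [← List.append_assoc] at h
  exact notBot_prefix hdet hL h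

/-- characterization of rank-2 transitions out of a pointed class -/
lemma rank2_mem {u v : List A} (h : IsPointed L u v) {a : A} {s : CanonState L} :
    (cls L u v h, a, Rk.two, s) ∈ (canonAut L).delta ↔
      ∃ (h2 : IsPointed L u (v ++ [a])), s = cls L u (v ++ [a]) h2 := by
  constructor
  · rintro (⟨u₀, v₀, h₀, h₀', hnb₀, ht1, _, ht2⟩ | ⟨u₀, v₀, u₀', v₀', h₀, h₀', hsim₀, ht1, hrk, ht2⟩)
    · simp only at ht1 ht2
      have hequiv := cls_eq_iff.mp ht1
      have hmem : [a] ∈ Sfl L u v := by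
        rw [hequiv.2]
        exact hnb₀
      have h2 : IsPointed L u (v ++ [a]) := pointed_extend hdet hL h hmem
      refine ⟨h2, ?_⟩
      rw [ht2, cls_eq_iff]
      constructor
      · have := simL_append_right hequiv.1 [a]
        rw [List.append_assoc, List.append_assoc] at this
        exact simL_symm this
      · rw [sfl_shift hdet hL, sfl_shift hdet hL, hequiv.2]
    · simp only at hrk
      exact absurd hrk.symm (by simp)
  · rintro ⟨h2, rfl⟩
    left
    exact ⟨u, v, h, h2, h2.1, rfl, rfl, rfl⟩

/-- characterization of rank-1 transitions -/
lemma rank1_mem {u v u' v' : List A} {h : IsPointed L u v} {h' : IsPointed L u' v'} {a : A} :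
    (cls L u v h, a, Rk.one, cls L u' v' h') ∈ (canonAut L).delta ↔
      SimL L (u ++ v ++ [a]) (u' ++ v') := by
  constructor
  · rintro (⟨u₀, v₀, h₀, h₀', hnb₀, ht1, hrk, ht2⟩ | ⟨u₀, v₀, u₀', v₀', h₀, h₀', hsim₀, ht1, hrk, ht2⟩)
    · simp only at hrk
      exact absurd hrk.symm (by simp)
    · simp only at ht1 ht2 hsim₀
      have hequiv := cls_eq_iff.mp ht1
      have hequiv' := cls_eq_iff.mp ht2
      have h1 : SimL L (u ++ v ++ [a]) (u₀ ++ v₀ ++ [a]) := simL_append_right hequiv.1 [a]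
      exact simL_trans (simL_trans h1 hsim₀) (simL_symm hequiv'.1)
  · intro hsim
    right
    exact ⟨u, v, u', v', h, h', hsim, rfl, rfl, rfl⟩

/-- transitions preserve residuals -/
lemma res_edge {s s' : CanonState L} {a : A} {rk : Rk}
    (hmem : (s, a, rk, s') ∈ (canonAut L).delta) :
    Res L s' = {w | consW a w ∈ Res L s} := by
  rcases hmem with ⟨u₀, v₀, h₀, h₀', hnb₀, ht1, _, ht2⟩ |
    ⟨u₀, v₀, u₀', v₀', h₀, h₀', hsim₀, ht1, _, ht2⟩
  · simp only at ht1 ht2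
    rw [ht1, ht2, res_cls, res_cls, ← List.append_assoc, resL_snoc]
  · simp only at ht1 ht2 hsim₀
    rw [ht1, ht2, res_cls, res_cls, ← simL_iff_resL.mp hsim₀, resL_snoc]

/-- initial states are exactly those whose residual is `L` -/
lemma init_iff {s : CanonState L} : s ∈ (canonAut L).init ↔ Res L s = L := by
  constructor
  · rintro ⟨u, v, h, rfl, hsim⟩
    rw [res_cls, simL_iff_resL.mp hsim]
    ext w
    simp [ResL, appW_nil]
  · intro hres
    obtain ⟨u, v, h, rfl⟩ := exists_rep s
    refine ⟨u, v, h, rfl, ?_⟩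
    rw [simL_iff_resL]
    have h1 : ResL L (u ++ v) = L := by rw [← res_cls h, hres]
    rw [h1]
    ext w
    simp [ResL, appW_nil]

/-- safe runs in the canonical automaton follow the `Sfl` of a pointed pair -/
lemma safeReach_canon {u : List A} : ∀ (x v : List A) (h : IsPointed L u v),
    x ∈ Sfl L u v → ∀ (h2 : IsPointed L u (v ++ x)),
      (canonAut L).SafeReach (cls L u v h) x (cls L u (v ++ x) h2) := by
  intro x
  induction x with
  | nil =>
    intro v h _ h2
    show cls L u v h = cls L u (v ++ []) h2
    exact cls_congr (by simp) h h2
  | cons a x ih =>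
    intro v h hx h2
    have ha : [a] ∈ Sfl L u v := sfl_prefix_mem hdet hL (x := [a]) (y := x) (by simpa using hx)
    have hpa : IsPointed L u (v ++ [a]) := pointed_extend hdet hL h ha
    have hx2 : x ∈ Sfl L u (v ++ [a]) := by
      rw [sfl_mem_iff, List.append_assoc]
      exact hx
    have hlist : (v ++ [a]) ++ x = v ++ (a :: x) := by
      rw [List.append_assoc]; rfl
    have h3 : IsPointed L u ((v ++ [a]) ++ x) := by rw [hlist]; exact h2
    refine ⟨cls L u (v ++ [a]) hpa, (rank2_mem hdet hL h).mpr ⟨hpa, rfl⟩, ?_⟩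
    have := ih (v ++ [a]) hpa hx2 h3
    rwa [cls_congr hlist h3 h2] at this

/-- safe runs in the canonical automaton: inverse direction -/
lemma safeReach_canon_inv {u : List A} : ∀ (x v : List A) (h : IsPointed L u v)
    (s : CanonState L), (canonAut L).SafeReach (cls L u v h) x s →
      x ∈ Sfl L u v ∧ ∃ (h2 : IsPointed L u (v ++ x)), s = cls L u (v ++ x) h2 := by
  intro x
  induction x with
  | nil =>
    intro v h s hsr
    have hs : cls L u v h = s := hsr
    have h2 : IsPointed L u (v ++ []) := by simpa using h
    refine ⟨?_, h2, ?_⟩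
    · rw [sfl_mem_iff, List.append_nil]
      exact h.1
    · rw [← hs]
      exact cls_congr (by simp) h h2
  | cons a x ih =>
    intro v h s hsr
    obtain ⟨p, hmem, hsr2⟩ := hsr
    have hrk2 : p = p := rfl
    -- p must be cls L u (v ++ [a])
    obtain ⟨hpa, rfl⟩ := (rank2_mem hdet hL h).mp hmem
    obtain ⟨hmem2, h3, rfl⟩ := ih (v ++ [a]) hpa _ hsr2
    have hlist : (v ++ [a]) ++ x = v ++ (a :: x) := by
      rw [List.append_assoc]; rfl
    have h2 : IsPointed L u (v ++ (a :: x)) := by rw [← hlist]; exact h3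
    refine ⟨?_, h2, cls_congr hlist h3 h2⟩
    rw [sfl_mem_iff, ← hlist]
    exact h3.1

end Stmt9Canon
section Stmt9Sound

open CoBuchi

set_option linter.unusedVariables false
set_option linter.unusedSectionVars false
set_option maxHeartbeats 1000000

variable {A : Type} [Nonempty A] {Q : Type} [Fintype Q] {M : CoBuchi A Q}
  (hdet : M.Deterministic) {L : Set (ℕ → A)} (hL : M.Lang = L)

lemma segW_succ_right (γ : ℕ → A) (m k : ℕ) :
    segW γ m (k + 1) = segW γ m k ++ [γ (m + k)] := by
  simp [segW, List.range_succ]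

lemma segW_add (γ : ℕ → A) (m k l : ℕ) :
    segW γ m (k + l) = segW γ m k ++ segW γ (m + k) l := by
  have h1 : prefW γ (m + (k + l)) = prefW γ m ++ segW γ m (k + l) := prefW_add γ m (k + l)
  have h2 : prefW γ (m + (k + l)) = prefW γ m ++ (segW γ m k ++ segW γ (m + k) l) := by
    rw [show m + (k + l) = (m + k) + l by omega, prefW_add, prefW_add, List.append_assoc]
  rw [h1] at h2
  exact List.append_cancel_left h2

lemma prefW_take (γ : ℕ → A) {n m : ℕ} (h : n ≤ m) :
    (prefW γ m).take n = prefW γ n := by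
  apply List.ext_getElem (by simp [prefW_length]; omega)
  intro i h1 h2
  rw [List.getElem_take, prefW_getElem, prefW_getElem]

lemma natRun_add {p : Q} (γ : ℕ → A) (m l : ℕ) :
    natRun hdet p γ (m + l) = dstar hdet (natRun hdet p γ m) (segW γ m l) := by
  rw [natRun, natRun, prefW_add, dstar_append]

/-- extend a safe reach by one safe transition (general automata) -/
lemma safeReach_snoc {Q' : Type} {M' : CoBuchi A Q'} {p q q' : Q'} {a : A} :
    ∀ {w : List A}, M'.SafeReach p w q → (q, a, Rk.two, q') ∈ M'.delta →
      M'.SafeReach p (w ++ [a]) q' := by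
  intro w
  induction w generalizing p with
  | nil =>
    intro h1 h2
    have : p = q := h1
    subst this
    exact ⟨q', h2, rfl⟩
  | cons b w ih =>
    rintro ⟨p', hmem, hsr⟩ h2
    exact ⟨p', hmem, ih hsr h2⟩

include hdet hL

/-- core soundness: a word all of whose prefixes stay in the safe language
belongs to the residual -/
lemma sound_core {u v : List A} (h : IsPointed L u v) {β : ℕ → A}
    (hall : ∀ k, prefW β k ∈ Sfl L u v) : appW v β ∈ ResL L u := by
  classical
  have hch : ∀ k, ∃ p, M.LangFrom p = ResL L u ∧ v ++ prefW β k ∈ SfLoop hdet p := by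
    intro k
    exact (notBot_iff hdet hL u (v ++ prefW β k)).mp (hall k)
  choose P hP1 hP2 using hch
  obtain ⟨p, hpfib⟩ := Finite.exists_infinite_fiber P
  have hfib : (P ⁻¹' {p}).Infinite := Set.infinite_coe_iff.mp hpfib
  have hpmem : ∀ k, v ++ prefW β k ∈ SfLoop hdet p := by
    intro k
    obtain ⟨k', hk'mem, hk'gt⟩ := hfib.exists_gt k
    have hPk : P k' = p := hk'mem
    have hsub : prefW β k' = prefW β k ++ segW β k (k' - k) := by
      rw [← prefW_add]
      congr 1
      omega
    have hx := hP2 k'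
    rw [hPk] at hx
    rw [hsub, ← List.append_assoc] at hx
    exact sfLoop_prefix hdet hx
  -- the canonical run of M from p on appW v β is all-safe
  have hsafe : ∀ n, rkOf hdet (natRun hdet p (appW v β) n) ((appW v β) n) = Rk.two := by
    intro n
    have hk := hpmem (n + 1)
    have hsp : SafeP hdet p (v ++ prefW β (n + 1)) := ((sfLoop_iff hdet).mp hk).1
    have hlen : n < (v ++ prefW β (n + 1)).length := by
      simp [prefW_length]
      omega
    have := safeP_rank hdet hsp n hlen
    have htake : (v ++ prefW β (n + 1)).take n = prefW (appW v β) n := by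
      have h1 : v ++ prefW β (n + 1) = prefW (appW v β) (v.length + (n + 1)) := by
        rw [prefW_appW]
      rw [h1, prefW_take]
      omega
    have hget : (v ++ prefW β (n + 1)).get ⟨n, hlen⟩ = (appW v β) n := by
      have h1 : v ++ prefW β (n + 1) = prefW (appW v β) (v.length + (n + 1)) := by
        rw [prefW_appW]
      simp only [h1, List.get_eq_getElem]
      rw [prefW_getElem]
    rw [htake, hget] at this
    exact this
  have hmm : appW v β ∈ M.LangFrom p := (langFrom_iff hdet p _).mpr ⟨0, fun n _ => hsafe n⟩
  have hLp : M.LangFrom p = ResL L u := by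
    obtain ⟨k₀, hk₀⟩ := hfib.nonempty
    have : P k₀ = p := hk₀
    rw [← this]
    exact hP1 k₀
  rw [hLp] at hmm
  exact hmm

/-- soundness of the canonical automaton -/
theorem canon_sound (s : CanonState L) : (canonAut L).LangFrom s ⊆ Res L s := by
  rintro α ⟨ρ, r, h0, hstep, N, hN⟩
  have hres : ∀ n, Res L (ρ n) = {w | appW (prefW α n) w ∈ Res L s} := by
    intro n
    induction n with
    | zero =>
      rw [h0]
      ext w
      simp [prefW_zero, appW_nil]
    | succ n ih =>
      rw [res_edge hdet hL (hstep n), ih]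
      ext w
      simp only [Set.mem_setOf_eq, prefW_succ, appW_snoc]
  -- safe tail
  have htail : ∀ k, (canonAut L).SafeReach (ρ N) (segW α N k) (ρ (N + k)) := by
    intro k
    induction k with
    | zero => exact rfl
    | succ k ih =>
      rw [segW_succ_right]
      have hrk : r (N + k) = Rk.two := hN (N + k) (by omega)
      have hedge := hstep (N + k)
      rw [hrk] at hedge
      exact safeReach_snoc ih hedge
  obtain ⟨u', v', h', hrep⟩ := exists_rep (ρ N)
  have hpref : ∀ k, prefW (sfW α N) k ∈ Sfl L u' v' := by
    intro k
    have := htail k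
    rw [hrep] at this
    have hinv := safeReach_canon_inv hdet hL (segW α N k) v' h' _ this
    rw [← segW_eq_prefW_sfW]
    exact hinv.1
  have hmem := sound_core hdet hL h' hpref
  -- conclude
  have hres' : appW v' (sfW α N) ∈ ResL L u' → sfW α N ∈ Res L (ρ N) := by
    intro hm
    rw [hrep, res_cls, resL_append]
    exact hm
  have h1 := hres' hmem
  rw [hres N] at h1
  simp only [Set.mem_setOf_eq] at h1
  have h2 : appW (prefW α N) (sfW α N) = α := appW_prefW_sfW α N
  rwa [h2] at h1

end Stmt9Sound
section Stmt9Complete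

open CoBuchi

set_option linter.unusedVariables false
set_option linter.unusedSectionVars false
set_option maxHeartbeats 1000000

variable {A : Type} [Nonempty A] {Q : Type} [Fintype Q] {M : CoBuchi A Q}
  (hdet : M.Deterministic) {L : Set (ℕ → A)} (hL : M.Lang = L)

include hdet hL

lemma rank1_edge {s s' : CanonState L} {a : A}
    (h : Res L s' = {w | consW a w ∈ Res L s}) : (s, a, Rk.one, s') ∈ (canonAut L).delta := by
  obtain ⟨u, v, hp, rfl⟩ := exists_rep s
  obtain ⟨u', v', hp', rfl⟩ := exists_rep s'
  apply (rank1_mem hdet hL).mpr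
  rw [simL_iff_resL, resL_snoc]
  rw [res_cls, res_cls] at h
  exact h.symm

omit hL in
/-- every accepted word has arbitrarily late "anchors": positions from which the
run of `M` stays in the safe loop set forever -/
lemma exists_anchor {γ : ℕ → A} (hγ : γ ∈ M.LangFrom (q0 hdet)) (m : ℕ) :
    ∃ n₀, m ≤ n₀ ∧ ∀ k, segW γ n₀ k ∈ SfLoop hdet (natRun hdet (q0 hdet) γ n₀) := by
  classical
  obtain ⟨N, hN⟩ := (langFrom_iff hdet _ γ).mp hγ
  set N' := max N m with hN'
  obtain ⟨pst, hfib'⟩ := Finite.exists_infinite_fiber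
    (fun i : ℕ => natRun hdet (q0 hdet) γ (N' + i))
  have hfib : ((fun i : ℕ => natRun hdet (q0 hdet) γ (N' + i)) ⁻¹' {pst}).Infinite :=
    Set.infinite_coe_iff.mp hfib'
  obtain ⟨i₀, hi₀⟩ := hfib.nonempty
  have hi₀' : natRun hdet (q0 hdet) γ (N' + i₀) = pst := hi₀
  refine ⟨N' + i₀, by omega, ?_⟩
  intro k
  obtain ⟨i₁, hi₁mem, hi₁gt⟩ := hfib.exists_gt (i₀ + k)
  have hi₁' : natRun hdet (q0 hdet) γ (N' + i₁) = pst := hi₁mem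
  set n₀ := N' + i₀ with hn₀
  have hloop : segW γ n₀ (i₁ - i₀) ∈ SfLoop hdet (natRun hdet (q0 hdet) γ n₀) := by
    refine ⟨[], ?_⟩
    rw [List.append_nil, safeReach_iff hdet]
    constructor
    · have := segW_safeP hdet hN (i₁ - i₀) n₀ (by omega)
      exact this
    · rw [← natRun_add hdet]
      rw [show n₀ + (i₁ - i₀) = N' + i₁ by omega, hi₁', ← hi₀']
  have hsplit : segW γ n₀ (i₁ - i₀) = segW γ n₀ k ++ segW γ (n₀ + k) (i₁ - i₀ - k) := by
    rw [← segW_add]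
    congr 1
    omega
  rw [hsplit] at hloop
  exact sfLoop_prefix hdet hloop

/-- completeness of the canonical automaton -/
theorem canon_complete (s : CanonState L) : Res L s ⊆ (canonAut L).LangFrom s := by
  classical
  obtain ⟨u, v, h, rfl⟩ := exists_rep s
  intro α hα
  set c := u ++ v with hc
  set γ := appW c α with hγdef
  have hγL : γ ∈ M.LangFrom (q0 hdet) := by
    rw [← lang_eq_langFrom hdet, hL]
    exact hα
  obtain ⟨n₀, hn₀ge, hanch⟩ := exists_anchor hdet hγL c.length
  set d := n₀ - c.length with hd
  have hn₀ : n₀ = c.length + d := by omega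
  set w₁ := prefW γ n₀ with hw₁
  set p := natRun hdet (q0 hdet) γ n₀ with hpdef
  have hp : M.LangFrom p = ResL L w₁ := (resL_eq hdet hL w₁).symm
  obtain ⟨us, vs, hpt, hsim, hdom⟩ := exists_pointed_dom hdet hL w₁ p hp
  have hTex : ∀ n : ℕ, ∃ s' : CanonState L, Res L s' = ResL L (prefW γ n) := by
    intro n
    obtain ⟨u₁, v₁, h₁, hsim₁⟩ := exists_pointed hdet hL (prefW γ n)
    exact ⟨cls L u₁ v₁ h₁, by rw [res_cls, simL_iff_resL.mp hsim₁]⟩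
  choose T hT using hTex
  have hseg : ∀ k, segW γ n₀ k ∈ Sfl L us vs := fun k => hdom (hanch k)
  have hptk : ∀ k, IsPointed L us (vs ++ segW γ n₀ k) :=
    fun k => pointed_extend hdet hL hpt (hseg k)
  set ρc : ℕ → CanonState L := fun n =>
    if n = 0 then cls L u v h
    else if n ≤ d then T (c.length + n)
    else cls L us (vs ++ segW γ n₀ (n - d)) (hptk (n - d)) with hρc
  have hletter : ∀ n, α n = γ (c.length + n) := by
    intro n
    rw [hγdef, appW_add]
  have hres : ∀ n, Res L (ρc n) = ResL L (prefW γ (c.length + n)) := by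
    intro n
    simp only [hρc]
    by_cases h0 : n = 0
    · subst h0
      rw [if_pos rfl, res_cls]
      congr 1
      rw [hγdef, Nat.add_zero, prefW_appW_length]
    · rw [if_neg h0]
      by_cases h1 : n ≤ d
      · rw [if_pos h1]
        exact hT (c.length + n)
      · rw [if_neg h1]
        rw [res_cls]
        have hsim2 : SimL L (us ++ (vs ++ segW γ n₀ (n - d))) (w₁ ++ segW γ n₀ (n - d)) := by
          have := simL_append_right hsim (segW γ n₀ (n - d))
          rwa [List.append_assoc] at this
        rw [simL_iff_resL.mp hsim2, hw₁, ← prefW_add]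
        have harith : n₀ + (n - d) = c.length + n := by omega
        rw [harith]
  have hstep : ∀ n, (ρc n, α n, (if n ≤ d then Rk.one else Rk.two), ρc (n + 1)) ∈
      (canonAut L).delta := by
    intro n
    by_cases h1 : n ≤ d
    · rw [if_pos h1]
      apply rank1_edge hdet hL
      rw [hres (n + 1), hres n, show c.length + (n + 1) = (c.length + n) + 1 by omega,
        prefW_succ, resL_snoc, hletter n]
    · rw [if_neg h1]
      -- n > d : rank-2 step
      have hn1 : ¬ (n + 1 = 0) := by omega
      have hn2 : ¬ (n + 1 ≤ d) := by omega
      have hn3 : ¬ (n = 0) := by omega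
      have hρn : ρc n = cls L us (vs ++ segW γ n₀ (n - d)) (hptk (n - d)) := by
        simp only [hρc]; rw [if_neg hn3, if_neg h1]
      have hρn1 : ρc (n + 1) = cls L us (vs ++ segW γ n₀ (n + 1 - d)) (hptk (n + 1 - d)) := by
        simp only [hρc]; rw [if_neg hn1, if_neg hn2]
      rw [hρn, hρn1]
      have hlr : α n = γ (n₀ + (n - d)) := by
        rw [hletter n, hn₀]
        congr 1
        omega
      have hlist : vs ++ segW γ n₀ (n + 1 - d) = (vs ++ segW γ n₀ (n - d)) ++ [γ (n₀ + (n - d))] := by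
        rw [show n + 1 - d = (n - d) + 1 by omega, segW_succ_right, ← List.append_assoc]
      have hpt2 : IsPointed L us ((vs ++ segW γ n₀ (n - d)) ++ [γ (n₀ + (n - d))]) := by
        rw [← hlist]; exact hptk (n + 1 - d)
      rw [hlr]
      apply (rank2_mem hdet hL (hptk (n - d))).mpr
      exact ⟨hpt2, cls_congr hlist _ _⟩
  refine ⟨ρc, fun n => if n ≤ d then Rk.one else Rk.two, ?_, hstep, d + 1, ?_⟩
  · simp [hρc]
  · intro n hn
    simp only []
    rw [if_neg (by omega)]

/-- the language of each canonical state is exactly its residual -/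
theorem canon_lang (s : CanonState L) : (canonAut L).LangFrom s = Res L s :=
  Set.Subset.antisymm (canon_sound hdet hL s) (canon_complete hdet hL s)

end Stmt9Complete
section Stmt9HD

open CoBuchi

set_option linter.unusedVariables false
set_option linter.unusedSectionVars false
set_option maxHeartbeats 1000000

variable {A : Type} [Nonempty A] {Q : Type} [Fintype Q] {M : CoBuchi A Q}
  (hdet : M.Deterministic) {L : Set (ℕ → A)} (hL : M.Lang = L)

lemma resL_nil : ResL L [] = L := by
  ext w
  simp [ResL, appW_nil]

lemma prefW_drop (α : ℕ → A) {n m : ℕ} (h : n ≤ m) :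
    (prefW α m).drop n = segW α n (m - n) := by
  apply List.ext_getElem (by simp [prefW_length, segW]; try omega)
  intro i h1 h2
  simp only [List.getElem_drop, segW, List.getElem_map, List.getElem_range]
  try rw [prefW_getElem]

/-- mono bounded sequences of naturals stabilize -/
lemma mono_stab {a : ℕ → ℕ} (hm : ∀ m, a m ≤ a (m + 1)) {B M₁ : ℕ}
    (hb : ∀ m, M₁ ≤ m → a m ≤ B) : ∃ M₀, ∀ m, M₀ ≤ m → a m = a M₀ := by
  have hmono : ∀ i j, i ≤ j → a i ≤ a j := by
    intro i j hij
    induction hij with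
    | refl => exact le_rfl
    | step _ ih => exact le_trans ih (hm _)
  have key : ∀ d m, M₁ ≤ m → B - a m ≤ d → ∃ M₀, m ≤ M₀ ∧ ∀ m', M₀ ≤ m' → a m' = a M₀ := by
    intro d
    induction d with
    | zero =>
      intro m hm1 hd
      have ham : a m = B := by
        have := hb m hm1
        omega
      refine ⟨m, le_rfl, fun m' hm' => ?_⟩
      have h1 := hmono m m' hm'
      have h2 := hb m' (by omega)
      omega
    | succ d ih =>
      intro m hm1 hd
      by_cases hstab : ∀ m', m ≤ m' → a m' = a m
      · exact ⟨m, le_rfl, fun m' hm' => by rw [hstab m' hm']⟩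
      · push_neg at hstab
        obtain ⟨m', hm'ge, hne⟩ := hstab
        have hgt : a m < a m' := lt_of_le_of_ne (hmono m m' hm'ge) (Ne.symm hne)
        obtain ⟨M₀, hM₀ge, hM₀⟩ := ih m' (by omega) (by omega)
        exact ⟨M₀, by omega, hM₀⟩
  obtain ⟨M₀, _, hM₀⟩ := key (B - a M₁) M₁ le_rfl le_rfl
  exact ⟨M₀, hM₀⟩

/-- the anchor predicate: position `n` of `w` from which the rest of the run
stays in the safe loop set -/
def AnchP (hdet : M.Deterministic) (w : List A) (n : ℕ) : Prop :=
  n ≤ w.length ∧ (w.drop n) ∈ SfLoop hdet (dstar hdet (q0 hdet) (w.take n))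

lemma anchP_exists (w : List A) : ∃ n, AnchP hdet w n :=
  ⟨w.length, le_rfl, by rw [List.drop_length]; exact sfLoop_nil hdet _⟩

/-- the earliest anchor of a finite word -/
noncomputable def anch (hdet : M.Deterministic) (w : List A) : ℕ :=
  letI : DecidablePred (AnchP hdet w) := fun n => Classical.dec _
  Nat.find (anchP_exists hdet w)

lemma anch_spec (w : List A) : AnchP hdet w (anch hdet w) := by
  letI : DecidablePred (AnchP hdet w) := fun n => Classical.dec _
  exact Nat.find_spec (anchP_exists hdet w)

lemma anch_min {w : List A} {n : ℕ} (h : AnchP hdet w n) : anch hdet w ≤ n := by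
  letI : DecidablePred (AnchP hdet w) := fun n => Classical.dec _
  exact Nat.find_min' (anchP_exists hdet w) h

lemma anch_le (w : List A) : anch hdet w ≤ w.length := (anch_spec hdet w).1

include hL

/-- choice of a dominating pointed pair for each prefix -/
lemma gSpec (w₁ : List A) : ∃ uv : List A × List A, IsPointed L uv.1 uv.2 ∧
    SimL L (uv.1 ++ uv.2) w₁ ∧ SfLoop hdet (dstar hdet (q0 hdet) w₁) ⊆ Sfl L uv.1 uv.2 := by
  obtain ⟨u, v, h1, h2, h3⟩ := exists_pointed_dom hdet hL w₁ (dstar hdet (q0 hdet) w₁)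
    (resL_eq hdet hL w₁).symm
  exact ⟨(u, v), h1, h2, h3⟩

noncomputable def gUV (w₁ : List A) : List A × List A := (gSpec hdet hL w₁).choose

lemma gUV_pointed (w₁ : List A) : IsPointed L (gUV hdet hL w₁).1 (gUV hdet hL w₁).2 :=
  (gSpec hdet hL w₁).choose_spec.1

lemma gUV_sim (w₁ : List A) : SimL L ((gUV hdet hL w₁).1 ++ (gUV hdet hL w₁).2) w₁ :=
  (gSpec hdet hL w₁).choose_spec.2.1

lemma gUV_dom (w₁ : List A) :
    SfLoop hdet (dstar hdet (q0 hdet) w₁) ⊆ Sfl L (gUV hdet hL w₁).1 (gUV hdet hL w₁).2 :=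
  (gSpec hdet hL w₁).choose_spec.2.2

lemma sig_drop_mem (w : List A) :
    w.drop (anch hdet w) ∈ Sfl L (gUV hdet hL (w.take (anch hdet w))).1
      (gUV hdet hL (w.take (anch hdet w))).2 :=
  gUV_dom hdet hL _ (anch_spec hdet w).2

lemma sig_pointed (w : List A) :
    IsPointed L (gUV hdet hL (w.take (anch hdet w))).1
      ((gUV hdet hL (w.take (anch hdet w))).2 ++ w.drop (anch hdet w)) :=
  pointed_extend hdet hL (gUV_pointed hdet hL _) (sfl_mem_iff.mp (sig_drop_mem hdet hL w))

/-- the history-deterministic strategy -/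
noncomputable def sigC (w : List A) : CanonState L :=
  cls L (gUV hdet hL (w.take (anch hdet w))).1
    ((gUV hdet hL (w.take (anch hdet w))).2 ++ w.drop (anch hdet w)) (sig_pointed hdet hL w)

lemma sig_res (w : List A) : Res L (sigC hdet hL w) = ResL L w := by
  rw [sigC, res_cls, ← List.append_assoc]
  have h1 := simL_append_right (gUV_sim hdet hL (w.take (anch hdet w))) (w.drop (anch hdet w))
  rw [simL_iff_resL.mp h1, List.take_append_drop]

lemma sig_init : sigC hdet hL [] ∈ (canonAut L).init := by
  rw [init_iff hdet hL, sig_res hdet hL]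
  exact resL_nil

/-- the strategy takes a valid transition at every step -/
lemma sig_step (w : List A) (a : A) :
    (sigC hdet hL w, a,
      (if anch hdet (w ++ [a]) = anch hdet w then Rk.two else Rk.one),
      sigC hdet hL (w ++ [a])) ∈ (canonAut L).delta := by
  by_cases he : anch hdet (w ++ [a]) = anch hdet w
  · rw [if_pos he]
    have hle : anch hdet w ≤ w.length := anch_le hdet w
    have htake : (w ++ [a]).take (anch hdet (w ++ [a])) = w.take (anch hdet w) := by
      rw [he, List.take_append_of_le_length hle]
    have hdrop : (w ++ [a]).drop (anch hdet (w ++ [a])) = w.drop (anch hdet w) ++ [a] := by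
      rw [he, List.drop_append_of_le_length hle]
    -- target as an extension of the source
    have hpt2 : IsPointed L (gUV hdet hL (w.take (anch hdet w))).1
        (((gUV hdet hL (w.take (anch hdet w))).2 ++ w.drop (anch hdet w)) ++ [a]) := by
      have := sig_pointed hdet hL (w ++ [a])
      rw [htake, hdrop, ← List.append_assoc] at this
      exact this
    have htarget : sigC hdet hL (w ++ [a]) =
        cls L (gUV hdet hL (w.take (anch hdet w))).1
          (((gUV hdet hL (w.take (anch hdet w))).2 ++ w.drop (anch hdet w)) ++ [a]) hpt2 := by
      refine cls_congr2 ?_ ?_ _ _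
      · rw [htake]
      · rw [htake, hdrop, List.append_assoc]
    rw [htarget]
    exact (rank2_mem hdet hL (sig_pointed hdet hL w)).mpr ⟨hpt2, rfl⟩
  · rw [if_neg he]
    apply rank1_edge hdet hL
    rw [sig_res hdet hL, sig_res hdet hL, resL_snoc]

/-- monotonicity of the anchor -/
lemma anch_mono (w : List A) (a : A) : anch hdet w ≤ anch hdet (w ++ [a]) := by
  rcases Nat.lt_or_ge w.length (anch hdet (w ++ [a])) with hgt | hle
  · exact le_trans (anch_le hdet w) (by omega)
  · apply anch_min hdet
    have hsp := anch_spec hdet (w ++ [a])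
    refine ⟨hle, ?_⟩
    have hdrop : (w ++ [a]).drop (anch hdet (w ++ [a])) =
        w.drop (anch hdet (w ++ [a])) ++ [a] := List.drop_append_of_le_length hle
    have htake : (w ++ [a]).take (anch hdet (w ++ [a])) =
        w.take (anch hdet (w ++ [a])) := List.take_append_of_le_length hle
    have := hsp.2
    rw [hdrop, htake] at this
    exact sfLoop_prefix hdet this

include hdet

/-- the canonical automaton is history-deterministic -/
theorem canon_hd : (canonAut L).HistoryDet := by
  refine ⟨fun w => sigC hdet hL w, sig_init hdet hL, fun w a => ⟨_, sig_step hdet hL w a⟩, ?_⟩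
  intro α hα
  have hαL : α ∈ L := by
    obtain ⟨s₀, hs₀, hmem⟩ := hα
    have := canon_sound hdet hL s₀ hmem
    rwa [(init_iff hdet hL).mp hs₀] at this
  have hγ : α ∈ M.LangFrom (q0 hdet) := by
    rw [← lang_eq_langFrom hdet, hL]
    exact hαL
  obtain ⟨n₀G, _, hanchG⟩ := exists_anchor hdet hγ 0
  set am : ℕ → ℕ := fun m => anch hdet (prefW α m) with ham
  have hmono : ∀ m, am m ≤ am (m + 1) := by
    intro m
    rw [ham]
    simp only
    rw [prefW_succ]
    exact anch_mono hdet hL _ _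
  have hbdd : ∀ m, n₀G ≤ m → am m ≤ n₀G := by
    intro m hm
    apply anch_min hdet
    refine ⟨by rw [prefW_length]; omega, ?_⟩
    rw [prefW_drop α hm, prefW_take α hm]
    exact hanchG (m - n₀G)
  obtain ⟨M₀, hM₀⟩ := mono_stab hmono hbdd
  refine ⟨fun n => if anch hdet (prefW α (n + 1)) = anch hdet (prefW α n)
    then Rk.two else Rk.one, ?_, M₀, ?_⟩
  · intro n
    have := sig_step hdet hL (prefW α n) (α n)
    rw [← prefW_succ] at this
    exact this
  · intro n hn
    have h1 := hM₀ n hn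
    have h2 := hM₀ (n + 1) (by omega)
    simp only [ham] at h1 h2
    simp only []
    rw [if_pos (h2.trans h1.symm)]

end Stmt9HD
/-- `A_{≡_L}` is semantically-deterministic, unsafe-saturated,
normalized, and history-deterministic. -/
theorem stmt9 {A : Type} [Nonempty A] [Fintype A] (L : Set (ℕ → A))
    (hrec : DCWRecognizable L) :
    (canonAut L).SemDet ∧ (canonAut L).UnsafeSat ∧ (canonAut L).Normalized ∧
      (canonAut L).HistoryDet := by
  classical
  obtain ⟨Q, hfin, M, hdet, hL⟩ := hrec
  letI := hfin
  have K : ∀ s : CanonState L, (canonAut L).LangFrom s = Res L s := canon_lang hdet hL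
  refine ⟨?_, ?_, ?_, canon_hd hdet hL⟩
  · -- semantically deterministic
    intro p a rk q hmem
    rw [K q, K p]
    exact res_edge hdet hL hmem
  · -- unsafe saturated
    intro p a q heq
    rw [K q, K p] at heq
    obtain ⟨u, v, h, rfl⟩ := exists_rep p
    obtain ⟨u', v', h', rfl⟩ := exists_rep q
    exact rank1_edge hdet hL heq
  · -- normalized
    intro q a q' hmem
    obtain ⟨u, v, h, rfl⟩ := exists_rep q
    obtain ⟨h2, rfl⟩ := (rank2_mem hdet hL h).mp hmem
    obtain ⟨p, hp, hsf⟩ := (notBot_iff hdet hL u (v ++ [a])).mp h2.1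
    have hv : v ∈ SfLoop hdet p := sfLoop_prefix hdet hsf
    obtain ⟨z₀, hz₀⟩ := hsf
    obtain ⟨hsafe, hret⟩ := (safeReach_iff hdet _ _ _).mp hz₀
    set m := (v ++ [a]) ++ z₀ with hm
    have hmloop : m ∈ SfLoop hdet p := ⟨[], by rw [List.append_nil]; exact hz₀⟩
    have hmv : m ++ v ∈ SfLoop hdet p := sfLoop_loop_append hdet hmloop hret hv
    have hassoc : (v ++ [a]) ++ (z₀ ++ v) = m ++ v := by
      simp only [hm, List.append_assoc]
    have hx : (z₀ ++ v) ∈ Sfl L u (v ++ [a]) := by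
      rw [sfl_mem_iff, notBot_iff hdet hL]
      refine ⟨p, hp, ?_⟩
      rw [hassoc]
      exact hmv
    have h3 : IsPointed L u ((v ++ [a]) ++ (z₀ ++ v)) :=
      pointed_extend hdet hL h2 (sfl_mem_iff.mp hx)
    have hsr := safeReach_canon hdet hL (z₀ ++ v) (v ++ [a]) h2 hx h3
    refine ⟨z₀ ++ v, ?_⟩
    have hResm : ResL L (u ++ m) = ResL L u := by
      rw [resL_append, ← hp, ← langFrom_dstar hdet p m, hret]
    have hend : cls L u ((v ++ [a]) ++ (z₀ ++ v)) h3 = cls L u v h := by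
      rw [cls_eq_iff]
      constructor
      · rw [simL_iff_resL, resL_append, resL_append, ← hp, hassoc,
          ← langFrom_dstar hdet p (m ++ v), dstar_append, hret, langFrom_dstar]
      · have hsimm : SimL L (u ++ m) u := simL_iff_resL.mpr hResm
        have hnb : ¬ ApproxBot L u (m ++ v) := by
          rw [notBot_iff hdet hL]
          exact ⟨p, hp, hmv⟩
        have hptd := h.2 u m hsimm hnb
        rw [hassoc]
        exact hptd.symm
    rw [hend] at hsr
    exact hsr
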